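/- Support sends normalized-kernel composition to relational composition: for normalized kernels f : X → MDY and g : Y → MDZ on finite sets, supp(f ⊛ g) = supp(f) ; supp(g), where ⊛ is renormalized composition and ; is ordinary relational composition (with supp mapping ⊥ at input x to the empty relation at x). -/

import Mathlib

open scoped NNReal

/-- A normalized kernel: each input maps to either failure or a probability
distribution. -/
def IsNormalizedKernel {X Y : Type*} [Fintype Y] (f : X → Option (Y → ℝ≥0)) : Prop :=
  ∀ x d, f x = some d → ∑ y, d y = 1

/-- The substochastic kernel underlying a normalized kernel. -/
def toSub {X Y : Type*} (f : X → Option (Y → ℝ≥0)) : X → Y → ℝ≥0 :=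
  fun x y => (f x).elim 0 (fun d => d y)

open scoped Classical in
/-- Renormalized composition of normalized kernels. -/
noncomputable def ncomp {X Y Z : Type*} [Fintype Y] [Fintype Z]
    (f : X → Option (Y → ℝ≥0)) (g : Y → Option (Z → ℝ≥0)) :
    X → Option (Z → ℝ≥0) := fun x =>
  if (∑ y, ∑ z, toSub f x y * toSub g y z) = 0 then none
  else some (fun z => (∑ y, toSub f x y * toSub g y z) /
    (∑ y, ∑ z', toSub f x y * toSub g y z'))

/-- Support of a normalized kernel: `x` relates to `y` iff `f x ≠ ⊥` and the
distribution assigns positive probability to `y`. Failure at `x` gives the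
empty relation at `x`. -/
def supp {X Y : Type*} (f : X → Option (Y → ℝ≥0)) : X → Y → Prop :=
  fun x y => ∃ d, f x = some d ∧ 0 < d y

lemma toSub_pos_iff {X Y : Type*} (f : X → Option (Y → ℝ≥0)) (x : X) (y : Y) :
    0 < toSub f x y ↔ supp f x y := by
  unfold toSub supp
  cases h : f x with
  | none => simp
  | some d => simp

/-- Support sends renormalized composition of normalized kernels to ordinary
relational composition. -/
theorem supp_ncomp_relational {X Y Z : Type*} [Fintype Y] [Fintype Z]
    (f : X → Option (Y → ℝ≥0)) (g : Y → Option (Z → ℝ≥0))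
    (hf : IsNormalizedKernel f) (hg : IsNormalizedKernel g) :
    ∀ (x : X) (z : Z), supp (ncomp f g) x z ↔ ∃ y, supp f x y ∧ supp g y z := by
  intro x z
  classical
  have key : (0 < ∑ y, toSub f x y * toSub g y z) ↔ ∃ y, supp f x y ∧ supp g y z := by
    rw [pos_iff_ne_zero]
    constructor
    · intro hs
      obtain ⟨y, -, hy⟩ := Finset.exists_ne_zero_of_sum_ne_zero hs
      exact ⟨y, (toSub_pos_iff f x y).1 (pos_iff_ne_zero.2 fun h => hy (by simp [h])),
        (toSub_pos_iff g y z).1 (pos_iff_ne_zero.2 fun h => hy (by simp [h]))⟩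
    · rintro ⟨y, h1, h2⟩
      intro hs
      have := (Finset.sum_eq_zero_iff.1 hs) y (Finset.mem_univ y)
      exact absurd this (mul_ne_zero (pos_iff_ne_zero.1 ((toSub_pos_iff f x y).2 h1))
        (pos_iff_ne_zero.1 ((toSub_pos_iff g y z).2 h2)))
  have hle : (∑ y, toSub f x y * toSub g y z) ≤ ∑ y, ∑ z', toSub f x y * toSub g y z' := by
    apply Finset.sum_le_sum
    intro y _
    exact Finset.single_le_sum (f := fun z' => toSub f x y * toSub g y z')
      (fun _ _ => zero_le) (Finset.mem_univ z)
  constructor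
  · rintro ⟨d, hd, hdz⟩
    unfold ncomp at hd
    split_ifs at hd with h
    rw [← key]
    have hd' : (∑ y, toSub f x y * toSub g y z) / (∑ y, ∑ z', toSub f x y * toSub g y z') = d z :=
      congrFun (Option.some.inj hd) z
    rw [← hd'] at hdz
    rw [pos_iff_ne_zero]
    intro hnum
    rw [hnum, zero_div] at hdz
    exact lt_irrefl 0 hdz
  · intro h
    have hnum := key.2 h
    have hden : (∑ y, ∑ z', toSub f x y * toSub g y z') ≠ 0 :=
      pos_iff_ne_zero.1 (lt_of_lt_of_le hnum hle)
    refine ⟨_, by unfold ncomp; rw [if_neg hden], ?_⟩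
    exact pos_iff_ne_zero.2 (div_ne_zero (pos_iff_ne_zero.1 hnum) hden)
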